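/- Define the outcome function for the comply-number game with move family S ⊆ Finset ℕ₊ recursively: a heap x is a P-position iff for every s ∈ S with max s ≤ x there exists s_i ∈ s with x − s_i an N-position (N = not P). Then for S = { {d, 2d} : d ∈ ℕ₊ }, the set of P-positions is exactly the set of nonnegative integers whose base-3 digits are all 0 or 1. -/
import Mathlib


/-- P-positions of the comply-number game defined by a family `S` of finite sets of
positive integers: `x` is a P-position iff for every applicable move set `s ∈ S`
(i.e. `max s ≤ x`) there is some `i ∈ s` with `x - i` an N-position. -/
def complyNumP (S : Set (Finset ℕ)) : ℕ → Prop
  | x => ∀ s, s ∈ S → (∀ i ∈ s, i ≤ x) →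
      ∃ i, ∃ _ : i ∈ s, ∃ _ : 0 < i, ∃ _ : i ≤ x, ¬ complyNumP S (x - i)
termination_by x => x
decreasing_by all_goals omega

/-- The target set: base-3 digits all 0 or 1. -/
def T3 (x : ℕ) : Prop := ∀ c ∈ Nat.digits 3 x, c ≤ 1

lemma T3_rec (x : ℕ) : T3 x ↔ x % 3 ≤ 1 ∧ T3 (x / 3) := by
  rcases Nat.eq_zero_or_pos x with h | h
  · subst h; simp [T3]
  · unfold T3
    rw [Nat.digits_def' (by norm_num : (1:ℕ) < 3) h]
    simp

lemma T3_noAP : ∀ w u v : ℕ, T3 u → T3 v → T3 w → u + v = 2 * w → u = v := by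
  intro w
  induction w using Nat.strong_induction_on with
  | _ w ih =>
    intro u v hu hv hw h
    rcases Nat.eq_zero_or_pos w with h0 | h0
    · omega
    rw [T3_rec] at hu hv hw
    have h1 : u % 3 = v % 3 ∧ u / 3 + v / 3 = 2 * (w / 3) := by omega
    have := ih (w / 3) (by omega) (u / 3) (v / 3) hu.2 hv.2 hw.2 h1.2
    omega

lemma T3_greedy : ∀ x : ℕ, ¬ T3 x → ∃ a d : ℕ, 0 < d ∧ x = a + 2 * d ∧ T3 a ∧ T3 (a + d) := by
  intro x
  induction x using Nat.strong_induction_on with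
  | _ x ih =>
    intro hx
    have hx0 : 0 < x := by
      rcases Nat.eq_zero_or_pos x with h | h
      · exfalso; apply hx; subst h; intro c hc; simp at hc
      · exact h
    rw [T3_rec] at hx
    by_cases h1 : x % 3 ≤ 1
    · have hx3 : ¬ T3 (x / 3) := by tauto
      obtain ⟨a', d', hd', heq, ha', had'⟩ := ih (x / 3) (by omega) hx3
      refine ⟨3 * a' + x % 3, 3 * d', by omega, by omega, ?_, ?_⟩
      · rw [T3_rec]
        refine ⟨by omega, ?_⟩
        have h2 : (3 * a' + x % 3) / 3 = a' := by omega
        rw [h2]; exact ha'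
      · rw [T3_rec]
        refine ⟨by omega, ?_⟩
        have h2 : (3 * a' + x % 3 + 3 * d') / 3 = a' + d' := by omega
        rw [h2]; exact had'
    · -- x % 3 = 2
      have hm : x % 3 = 2 := by omega
      by_cases h2 : T3 (x / 3)
      · refine ⟨3 * (x / 3), 1, by omega, by omega, ?_, ?_⟩
        · rw [T3_rec]
          refine ⟨by omega, ?_⟩
          have h3 : (3 * (x / 3)) / 3 = x / 3 := by omega
          rw [h3]; exact h2
        · rw [T3_rec]
          refine ⟨by omega, ?_⟩
          have h3 : (3 * (x / 3) + 1) / 3 = x / 3 := by omega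
          rw [h3]; exact h2
      · obtain ⟨a', d', hd', heq, ha', had'⟩ := ih (x / 3) (by omega) h2
        refine ⟨3 * a', 3 * d' + 1, by omega, by omega, ?_, ?_⟩
        · rw [T3_rec]
          refine ⟨by omega, ?_⟩
          have h3 : (3 * a') / 3 = a' := by omega
          rw [h3]; exact ha'
        · rw [T3_rec]
          refine ⟨by omega, ?_⟩
          have h3 : (3 * a' + (3 * d' + 1)) / 3 = a' + d' := by omega
          rw [h3]; exact had'

/-- For `S = { {d, 2d} : d > 0 }`, the P-positions of the comply-number game are
exactly the nonnegative integers whose base-3 digits are all 0 or 1. -/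
theorem complyNum_threeAP_Ppositions (x : ℕ) :
    complyNumP {s : Finset ℕ | ∃ d : ℕ, 0 < d ∧ s = {d, 2 * d}} x ↔
      ∀ c ∈ Nat.digits 3 x, c ≤ 1 := by
  induction x using Nat.strong_induction_on with
  | _ x ih =>
    set S : Set (Finset ℕ) := {s : Finset ℕ | ∃ d : ℕ, 0 < d ∧ s = {d, 2 * d}} with hS
    show complyNumP S x ↔ T3 x
    rw [complyNumP]
    constructor
    · intro h
      by_contra hT
      obtain ⟨a, d, hd, heq, ha, had⟩ := T3_greedy x hT
      have hmem : ({d, 2 * d} : Finset ℕ) ∈ S := ⟨d, hd, rfl⟩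
      have happ : ∀ i ∈ ({d, 2 * d} : Finset ℕ), i ≤ x := by
        intro i hi
        simp only [Finset.mem_insert, Finset.mem_singleton] at hi
        omega
      obtain ⟨i, his, hip, hix, hni⟩ := h _ hmem happ
      simp only [Finset.mem_insert, Finset.mem_singleton] at his
      rcases his with h' | h'
      · apply hni
        have hlt : x - i < x := by omega
        have hxi : x - i = a + d := by omega
        rw [hxi] at hlt ⊢
        exact (ih _ hlt).mpr had
      · apply hni
        have hlt : x - i < x := by omega
        have hxi : x - i = a := by omega
        rw [hxi] at hlt ⊢
        exact (ih _ hlt).mpr ha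
    · intro hT s hs happ
      obtain ⟨d, hd, rfl⟩ := hs
      have h2d : 2 * d ≤ x := happ (2 * d) (by simp)
      have hx0 : 0 < x := by omega
      by_cases hp : complyNumP S (x - 2 * d)
      · -- then x - d must be an N-position
        refine ⟨d, by simp, hd, by omega, ?_⟩
        intro hq
        have ha : T3 (x - 2 * d) := (ih _ (by omega)).mp hp
        have hb : T3 (x - d) := (ih _ (by omega)).mp hq
        have : x - 2 * d = x := T3_noAP (x - d) (x - 2 * d) x ha hT hb (by omega)
        omega
      · exact ⟨2 * d, by simp, by omega, h2d, hp⟩
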